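/- The number of partitions p(a) of a positive integer a satisfies p(a) ≤ exp(π√(2a/3)). -/

import Mathlib

open Real Finset

namespace Stmt14Aux

lemma part_le {n : ℕ} (p : Nat.Partition n) {a : ℕ} (hmem : a ∈ p.parts) : a ≤ n := by
  rw [← p.parts_sum]
  exact Multiset.single_le_sum (fun x _ => Nat.zero_le x) _ hmem

lemma count_le {n : ℕ} (p : Nat.Partition n) (a : ℕ) : p.parts.count a ≤ n := by
  calc p.parts.count a ≤ Multiset.card p.parts := Multiset.count_le_card _ _
    _ = (p.parts.map fun _ => 1).sum := by simp
    _ ≤ (p.parts.map id).sum := by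
        apply Multiset.sum_map_le_sum_map
        intro i hi
        exact p.parts_pos hi
    _ = n := by rw [Multiset.map_id, p.parts_sum]

lemma sum_counts {n : ℕ} (p : Nat.Partition n) :
    ∑ i ∈ range n, (i + 1) * p.parts.count (i + 1) = n := by
  have h1 : p.parts.sum = ∑ m ∈ p.parts.toFinset, p.parts.count m • id m := by
    rw [← Finset.sum_multiset_map_count, Multiset.map_id]
  have hsub : p.parts.toFinset ⊆ (range n).image (· + 1) := by
    intro m hm
    rw [Multiset.mem_toFinset] at hm
    have h1m : 0 < m := p.parts_pos hm
    have hmn : m ≤ n := part_le p hm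
    simp only [Finset.mem_image, Finset.mem_range]
    exact ⟨m - 1, by omega, by omega⟩
  have h2 : ∑ m ∈ p.parts.toFinset, p.parts.count m • id m
      = ∑ m ∈ (range n).image (· + 1), p.parts.count m • id m := by
    apply Finset.sum_subset hsub
    intro m _ hm
    rw [Multiset.mem_toFinset] at hm
    simp [Multiset.count_eq_zero_of_notMem hm]
  have h3 : ∑ m ∈ (range n).image (· + 1), p.parts.count m • id m
      = ∑ i ∈ range n, p.parts.count (i + 1) • id (i + 1) := by
    apply Finset.sum_image
    intro a _ b _ h
    exact Nat.add_right_cancel h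
  have := p.parts_sum
  rw [h1, h2, h3] at this
  calc ∑ i ∈ range n, (i + 1) * p.parts.count (i + 1)
      = ∑ i ∈ range n, p.parts.count (i + 1) • id (i + 1) := by
        apply Finset.sum_congr rfl
        intro i _
        simp [mul_comm]
    _ = n := this

lemma counts_inj {n : ℕ} :
    Function.Injective
      (fun p : Nat.Partition n => fun i : Fin n => p.parts.count (i.val + 1)) := by
  intro p q h
  have hparts : p.parts = q.parts := by
    ext a
    rcases Nat.eq_zero_or_pos a with h0 | h0
    · subst h0
      rw [Multiset.count_eq_zero_of_notMem, Multiset.count_eq_zero_of_notMem]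
      · intro hmem; exact absurd (q.parts_pos hmem) (lt_irrefl 0)
      · intro hmem; exact absurd (p.parts_pos hmem) (lt_irrefl 0)
    · rcases le_or_gt a n with h1 | h1
      · have ha : a - 1 < n := by omega
        have := congrFun h ⟨a - 1, ha⟩
        simpa [Nat.sub_add_cancel h0] using this
      · rw [Multiset.count_eq_zero_of_notMem, Multiset.count_eq_zero_of_notMem]
        · intro hmem; exact absurd (part_le q hmem) (by omega)
        · intro hmem; exact absurd (part_le p hmem) (by omega)
  cases p; cases q; simpa using hparts

lemma card_mul_le (n : ℕ) {x : ℝ} (hx : 0 ≤ x) :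
    (Fintype.card (Nat.Partition n) : ℝ) * x ^ n
      ≤ ∏ i : Fin n, ∑ j ∈ range (n + 1), x ^ ((i.val + 1) * j) := by
  rw [Finset.prod_univ_sum]
  set F : Nat.Partition n → (Fin n → ℕ) :=
    fun p => fun i : Fin n => p.parts.count (i.val + 1) with hF
  have hterm : ∀ p : Nat.Partition n,
      (∏ i : Fin n, x ^ ((i.val + 1) * F p i)) = x ^ n := by
    intro p
    rw [Finset.prod_pow_eq_pow_sum]
    congr 1
    exact (Fin.sum_univ_eq_sum_range (fun i => (i + 1) * p.parts.count (i + 1)) n).trans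
      (sum_counts p)
  have hmem : ∀ p : Nat.Partition n,
      F p ∈ Fintype.piFinset (fun _ : Fin n => range (n + 1)) := by
    intro p
    rw [Fintype.mem_piFinset]
    intro i
    rw [Finset.mem_range]
    exact Nat.lt_succ_of_le (count_le p _)
  calc (Fintype.card (Nat.Partition n) : ℝ) * x ^ n
      = ∑ p : Nat.Partition n, ∏ i : Fin n, x ^ ((i.val + 1) * F p i) := by
        rw [Finset.sum_congr rfl (fun p _ => hterm p), Finset.sum_const, Finset.card_univ,
          nsmul_eq_mul]
    _ = ∑ f ∈ Finset.univ.image F, ∏ i : Fin n, x ^ ((i.val + 1) * f i) := by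
        rw [Finset.sum_image (fun p _ q _ h => counts_inj h)]
    _ ≤ ∑ f ∈ Fintype.piFinset (fun _ : Fin n => range (n + 1)),
          ∏ i : Fin n, x ^ ((i.val + 1) * f i) := by
        apply Finset.sum_le_sum_of_subset_of_nonneg
        · intro f hf
          rw [Finset.mem_image] at hf
          obtain ⟨p, _, rfl⟩ := hf
          exact hmem p
        · intro f _ _
          exact Finset.prod_nonneg fun i _ => pow_nonneg hx _

lemma geom_le {r : ℝ} (h0 : 0 ≤ r) (h1 : r < 1) (m : ℕ) :
    ∑ j ∈ range m, r ^ j ≤ (1 - r)⁻¹ := by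
  have hr : 0 < 1 - r := by linarith
  rw [geom_sum_eq (ne_of_lt h1), show (r ^ m - 1) / (r - 1) = (1 - r ^ m) / (1 - r) by
    rw [← neg_div_neg_eq]; ring_nf]
  rw [div_le_iff₀ hr, inv_mul_cancel₀ (ne_of_gt hr)]
  have : 0 ≤ r ^ m := pow_nonneg h0 m
  linarith

lemma pow_div_le {x : ℝ} (h0 : 0 < x) (h1 : x < 1) (m : ℕ) :
    x ^ (m + 1) * (1 - x ^ (m + 1))⁻¹ ≤ x / ((m + 1) * (1 - x)) := by
  have hx1 : 0 < 1 - x := by linarith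
  have hgeom : (1 - x) * ∑ i ∈ range (m + 1), x ^ i = 1 - x ^ (m + 1) := by
    have := geom_sum_mul x (m + 1)
    nlinarith [this]
  have hbound : ((m : ℝ) + 1) * x ^ m ≤ ∑ i ∈ range (m + 1), x ^ i := by
    calc ((m : ℝ) + 1) * x ^ m = ∑ _i ∈ range (m + 1), x ^ m := by
          rw [Finset.sum_const, Finset.card_range, nsmul_eq_mul]; push_cast; ring
      _ ≤ ∑ i ∈ range (m + 1), x ^ i := by
          apply Finset.sum_le_sum
          intro i hi
          exact pow_le_pow_of_le_one h0.le h1.le (Finset.mem_range_succ_iff.mp hi)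
  have hD : ((m : ℝ) + 1) * x ^ m * (1 - x) ≤ 1 - x ^ (m + 1) := by
    rw [← hgeom]
    calc ((m : ℝ) + 1) * x ^ m * (1 - x) = (1 - x) * (((m : ℝ) + 1) * x ^ m) := by ring
      _ ≤ (1 - x) * ∑ i ∈ range (m + 1), x ^ i := by
          exact mul_le_mul_of_nonneg_left hbound hx1.le
  have hDpos : (0 : ℝ) < ((m : ℝ) + 1) * x ^ m * (1 - x) := by positivity
  have h1m : (0 : ℝ) < 1 - x ^ (m + 1) := lt_of_lt_of_le hDpos hD
  rw [← div_eq_mul_inv, div_le_div_iff₀ h1m (by positivity)]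
  have hxm : x ^ (m + 1) * (((m : ℝ) + 1) * (1 - x)) = x * (((m : ℝ) + 1) * x ^ m * (1 - x)) := by
    ring
  rw [hxm]
  calc x * (((m : ℝ) + 1) * x ^ m * (1 - x)) ≤ x * (1 - x ^ (m + 1)) :=
        mul_le_mul_of_nonneg_left hD h0.le
    _ = x * (1 - x ^ (m + 1)) := rfl

lemma basel_shift : HasSum (fun j : ℕ => (1 : ℝ) / ((j : ℝ) + 1) ^ 2) (π ^ 2 / 6) := by
  have h := hasSum_zeta_two
  have h2 : HasSum (fun j : ℕ => (1 : ℝ) / ((j + 1 : ℕ) : ℝ) ^ 2) (π ^ 2 / 6) := by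
    rw [hasSum_nat_add_iff (f := fun n : ℕ => (1 : ℝ) / (n : ℝ) ^ 2) 1]
    simpa using h
  have := h2
  simp only [Nat.cast_add, Nat.cast_one] at this
  exact this

lemma log_sum_le (n : ℕ) {x : ℝ} (h0 : 0 < x) (h1 : x < 1) :
    ∑ i ∈ range n, -Real.log (1 - x ^ (i + 1)) ≤ π ^ 2 / 6 * (x / (1 - x)) := by
  have hx1 : 0 < 1 - x := by linarith
  have hxk : ∀ k : ℕ, 0 < x ^ (k + 1) ∧ x ^ (k + 1) < 1 := by
    intro k
    exact ⟨pow_pos h0 _, pow_lt_one₀ h0.le h1 (Nat.succ_ne_zero k)⟩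
  have habs : ∀ k : ℕ, |x ^ (k + 1)| < 1 := by
    intro k
    rw [abs_of_pos (hxk k).1]
    exact (hxk k).2
  -- each log as a tsum
  have hlog : ∀ i : ℕ, HasSum (fun j : ℕ => (x ^ (i + 1)) ^ (j + 1) / (j + 1))
      (-Real.log (1 - x ^ (i + 1))) := fun i => hasSum_pow_div_log_of_abs_lt_one (habs i)
  have hswap : ∑ i ∈ range n, -Real.log (1 - x ^ (i + 1))
      = ∑' j : ℕ, ∑ i ∈ range n, (x ^ (i + 1)) ^ (j + 1) / (j + 1) := by
    rw [Summable.tsum_finsetSum (fun i _ => (hlog i).summable)]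
    exact Finset.sum_congr rfl fun i _ => ((hlog i).tsum_eq).symm
  rw [hswap]
  -- bound the inner sums
  have hxj : ∀ j : ℕ, 0 < x ^ (j + 1) ∧ x ^ (j + 1) < 1 := hxk
  have hinner : ∀ j : ℕ, ∑ i ∈ range n, (x ^ (i + 1)) ^ (j + 1) / (j + 1)
      ≤ x / (1 - x) * (1 / ((j : ℝ) + 1) ^ 2) := by
    intro j
    have hj1 : (0 : ℝ) < (j : ℝ) + 1 := by positivity
    have e1 : ∑ i ∈ range n, (x ^ (i + 1)) ^ (j + 1) / (j + 1)
        = (∑ i ∈ range n, (x ^ (j + 1)) ^ (i + 1)) / ((j : ℝ) + 1) := by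
      rw [Finset.sum_div]
      apply Finset.sum_congr rfl
      intro i _
      rw [← pow_mul, ← pow_mul, Nat.mul_comm]
    rw [e1]
    have e2 : ∑ i ∈ range n, (x ^ (j + 1)) ^ (i + 1) ≤ x ^ (j + 1) * (1 - x ^ (j + 1))⁻¹ := by
      calc ∑ i ∈ range n, (x ^ (j + 1)) ^ (i + 1)
          = x ^ (j + 1) * ∑ i ∈ range n, (x ^ (j + 1)) ^ i := by
            rw [Finset.mul_sum]
            exact Finset.sum_congr rfl fun i _ => by rw [pow_succ']
        _ ≤ x ^ (j + 1) * (1 - x ^ (j + 1))⁻¹ :=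
            mul_le_mul_of_nonneg_left (geom_le (hxj j).1.le (hxj j).2 n) (hxj j).1.le
    have e3 : x ^ (j + 1) * (1 - x ^ (j + 1))⁻¹ ≤ x / (((j : ℝ) + 1) * (1 - x)) := by
      have := pow_div_le h0 h1 j
      convert this using 3 <;> push_cast <;> ring
    have e4 : (∑ i ∈ range n, (x ^ (j + 1)) ^ (i + 1)) / ((j : ℝ) + 1)
        ≤ (x / (((j : ℝ) + 1) * (1 - x))) / ((j : ℝ) + 1) := by
      gcongr <;> first
        | exact Or.inl trivial
        | exact le_trans e2 e3
    refine e4.trans (le_of_eq ?_)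
    rw [div_div, mul_one_div, div_eq_div_iff (by positivity) (by positivity)]
    have hne : (1 - x) ≠ 0 := ne_of_gt hx1
    field_simp
  -- summability of both sides
  have hsum1 : Summable (fun j : ℕ => ∑ i ∈ range n, (x ^ (i + 1)) ^ (j + 1) / (j + 1)) := by
    exact summable_sum fun i _ => (hlog i).summable
  have hsum2 : Summable (fun j : ℕ => x / (1 - x) * (1 / ((j : ℝ) + 1) ^ 2)) :=
    basel_shift.summable.mul_left _
  calc ∑' j : ℕ, ∑ i ∈ range n, (x ^ (i + 1)) ^ (j + 1) / (j + 1)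
      ≤ ∑' j : ℕ, x / (1 - x) * (1 / ((j : ℝ) + 1) ^ 2) :=
        Summable.tsum_le_tsum hinner hsum1 hsum2
    _ = x / (1 - x) * (π ^ 2 / 6) := by
        rw [tsum_mul_left, basel_shift.tsum_eq]
    _ = π ^ 2 / 6 * (x / (1 - x)) := by ring

lemma prod_le_exp (n : ℕ) {x : ℝ} (h0 : 0 < x) (h1 : x < 1) :
    ∏ i : Fin n, (1 - x ^ (i.val + 1))⁻¹ ≤ Real.exp (π ^ 2 / 6 * (x / (1 - x))) := by
  have hpos : ∀ k : ℕ, 0 < 1 - x ^ (k + 1) := by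
    intro k
    have : x ^ (k + 1) < 1 := pow_lt_one₀ h0.le h1 (Nat.succ_ne_zero k)
    linarith
  have heq : ∏ i : Fin n, (1 - x ^ (i.val + 1))⁻¹
      = Real.exp (∑ i ∈ range n, -Real.log (1 - x ^ (i + 1))) := by
    rw [Real.exp_sum, ← Fin.prod_univ_eq_prod_range (fun i => Real.exp (-Real.log (1 - x ^ (i + 1)))) n]
    apply Finset.prod_congr rfl
    intro i _
    rw [Real.exp_neg, Real.exp_log (hpos i.val)]
  rw [heq]
  exact Real.exp_le_exp.2 (log_sum_le n h0 h1)

end Stmt14Aux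

open Real in
/-- The number of partitions of a positive integer `a` is at most `exp(π·√(2a/3))`. -/
theorem stmt14 (a : ℕ) (ha : 0 < a) :
    (Fintype.card (Nat.Partition a) : ℝ) ≤ Real.exp (π * Real.sqrt (2 * a / 3)) := by
  have hπ : (0 : ℝ) < π := Real.pi_pos
  set s : ℝ := Real.sqrt (6 * a) with hs
  have hs0 : 0 < s := Real.sqrt_pos.2 (by positivity)
  have hs2 : s ^ 2 = 6 * a := Real.sq_sqrt (by positivity)
  set t : ℝ := s / π with ht
  have ht0 : 0 < t := by positivity
  set x : ℝ := t / (1 + t) with hx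
  have hx0 : 0 < x := by positivity
  have hx1 : x < 1 := by
    rw [hx, div_lt_one (by positivity)]
    linarith
  have hxt : x / (1 - x) = t := by
    rw [hx]
    have h1t : (0 : ℝ) < 1 + t := by positivity
    field_simp
    ring
  -- combinatorial bound
  have h1 := Stmt14Aux.card_mul_le a hx0.le
  have h2 : ∏ i : Fin a, ∑ j ∈ range (a + 1), x ^ ((i.val + 1) * j)
      ≤ ∏ i : Fin a, (1 - x ^ (i.val + 1))⁻¹ := by
    apply Finset.prod_le_prod
    · intro i _
      exact Finset.sum_nonneg fun j _ => pow_nonneg hx0.le _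
    · intro i _
      calc ∑ j ∈ range (a + 1), x ^ ((i.val + 1) * j)
          = ∑ j ∈ range (a + 1), (x ^ (i.val + 1)) ^ j := by
            exact Finset.sum_congr rfl fun j _ => by rw [← pow_mul]
        _ ≤ (1 - x ^ (i.val + 1))⁻¹ :=
            Stmt14Aux.geom_le (pow_pos hx0 _).le
              (pow_lt_one₀ hx0.le hx1 (Nat.succ_ne_zero _)) _
  have h3 := Stmt14Aux.prod_le_exp a hx0 hx1
  have hmain : (Fintype.card (Nat.Partition a) : ℝ) * x ^ a
      ≤ Real.exp (π ^ 2 / 6 * t) := by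
    rw [← hxt]
    exact h1.trans (h2.trans h3)
  -- x^(-a) ≤ exp(a/t)
  have hlogx : -Real.log x ≤ 1 / t := by
    have : -Real.log x = Real.log x⁻¹ := (Real.log_inv x).symm
    rw [this, hx]
    have hinv : (t / (1 + t))⁻¹ = 1 + 1 / t := by
      field_simp
      ring
    rw [hinv]
    have := Real.log_le_sub_one_of_pos (show (0:ℝ) < 1 + 1/t by positivity)
    linarith
  have hxa : x ^ a = Real.exp (a * Real.log x) := by
    rw [← Real.log_pow, Real.exp_log (pow_pos hx0 a)]
  have hcard : (Fintype.card (Nat.Partition a) : ℝ)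
      ≤ Real.exp (π ^ 2 / 6 * t + a * (1 / t)) := by
    have hxapos : 0 < x ^ a := pow_pos hx0 a
    rw [← le_div_iff₀ hxapos] at hmain
    calc (Fintype.card (Nat.Partition a) : ℝ)
        ≤ Real.exp (π ^ 2 / 6 * t) / x ^ a := hmain
      _ = Real.exp (π ^ 2 / 6 * t - a * Real.log x) := by
          rw [hxa, ← Real.exp_sub]
      _ ≤ Real.exp (π ^ 2 / 6 * t + a * (1 / t)) := by
          apply Real.exp_le_exp.2
          have : (a : ℝ) * (-Real.log x) ≤ a * (1 / t) :=
            mul_le_mul_of_nonneg_left hlogx (Nat.cast_nonneg a)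
          linarith
  -- final arithmetic
  have hval : π ^ 2 / 6 * t + a * (1 / t) = π * Real.sqrt (2 * a / 3) := by
    have hsqrt : Real.sqrt (2 * a / 3) = s / 3 := by
      rw [show (2 * (a : ℝ) / 3) = (s / 3) ^ 2 by rw [div_pow, hs2]; ring]
      exact Real.sqrt_sq (by positivity)
    rw [hsqrt, ht]
    have ha6 : (a : ℝ) = s ^ 2 / 6 := by linarith
    rw [ha6]
    field_simp
    ring
  rw [← hval]
  exact hcard
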